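/- Let G be a finite bipartite simple graph equipped with a weight function assigning to each edge the weight +1 or −1, and suppose that every cycle of G has strictly positive total weight. Let v and w be distinct vertices of G joined by a path Q of length d ≥ 1 all of whose edges have weight +1. Then every path from v to w in G has total weight at least 2 − d. -/

import Mathlib

open Finset SimpleGraph SimpleGraph.Walk

lemma my_color_parity {V : Type*} {G : SimpleGraph V} (C : G.Coloring (Fin 2))
    {a b : V} (p : G.Walk a b) : C a = C b ↔ Even p.length := by
  induction p with
  | nil => simp
  | @cons u x b h q ih =>
    have hne : C u ≠ C x := C.valid h
    rw [Walk.length_cons, Nat.even_add_one, ← ih]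
    have h2 : (C u).val < 2 := (C u).isLt
    have h3 : (C x).val < 2 := (C x).isLt
    have h4 : (C b).val < 2 := (C b).isLt
    rw [Fin.ne_iff_vne] at hne
    constructor
    · intro hc hcx
      rw [Fin.ext_iff] at hc hcx; omega
    · intro hcx
      rw [Fin.ext_iff] at hcx ⊢
      omega

lemma my_sum_parity {α : Type*} [DecidableEq α] (s : Finset α) (f : α → ℤ)
    (hf : ∀ e ∈ s, f e = 1 ∨ f e = -1) : Even (∑ e ∈ s, f e - s.card) := by
  classical
  induction s using Finset.induction with
  | empty => simp
  | @insert a s ha ih =>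
    rw [Finset.sum_insert ha, Finset.card_insert_of_notMem ha]
    have h1 := hf a (Finset.mem_insert_self a s)
    obtain ⟨k, hk⟩ := ih (fun e he => hf e (Finset.mem_insert_of_mem he))
    rcases h1 with h | h <;> rw [h] <;> [exact ⟨k, by push_cast; omega⟩;
      exact ⟨k - 1, by push_cast; omega⟩]

lemma my_edge_path {V : Type*} {G : SimpleGraph V} {v w : V}
    {p : G.Walk v w} (hp : p.IsPath) (h : s(v, w) ∈ p.edges) :
    p.edges = [s(v, w)] := by
  cases p with
  | nil => simp at h
  | @cons _ x _ hadj q =>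
    rw [Walk.cons_isPath_iff] at hp
    rw [Walk.edges_cons] at h
    rcases List.mem_cons.mp h with h | h
    · have hx : w = x := by
        rw [Sym2.eq_iff] at h
        rcases h with ⟨_, h⟩ | ⟨h1, h2⟩
        · exact h
        · exact absurd h1 (G.ne_of_adj hadj)
      subst hx
      have : q = Walk.nil := Walk.isPath_iff_eq_nil.mp hp.1
      subst this
      simp
    · exact absurd (Walk.fst_mem_support_of_mem_edges q h) hp.2

lemma my_cycle {V : Type*} {G : SimpleGraph V} {v w : V} (hvw : v ≠ w)
    {P Q : G.Walk v w} (hP : P.IsPath) (hQ : Q.IsPath)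
    (hsupp : ∀ u, u ∈ P.support → u ∈ Q.support → u = v ∨ u = w)
    (hedge : ∀ e ∈ P.edges, e ∉ Q.edges) :
    (P.append Q.reverse).IsCycle := by
  rw [Walk.isCycle_def]
  refine ⟨⟨?_⟩, ?_, ?_⟩
  · rw [Walk.edges_append, Walk.edges_reverse, List.nodup_append]
    exact ⟨hP.isTrail.edges_nodup, List.nodup_reverse.mpr hQ.isTrail.edges_nodup,
      fun e he e' he' heq => hedge e he (by rw [heq]; exact List.mem_reverse.mp he')⟩
  · intro hnil
    have := congrArg Walk.length hnil
    rw [Walk.length_append] at this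
    simp only [Walk.length_nil, Nat.add_eq_zero] at this
    exact hvw (Walk.eq_of_length_eq_zero this.1)
  · rw [Walk.tail_support_append, List.nodup_append]
    refine ⟨hP.support_nodup.tail, hQ.reverse.support_nodup.tail, ?_⟩
    intro x hx x' hx' hxx
    rw [← hxx] at hx'
    have hxP : x ∈ P.support := List.mem_of_mem_tail hx
    have hxQ : x ∈ Q.support := by
      have := List.mem_of_mem_tail hx'
      rw [Walk.support_reverse, List.mem_reverse] at this; exact this
    rcases hsupp x hxP hxQ with rfl | rfl
    · have := hP.support_nodup
      rw [Walk.support_eq_cons] at this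
      exact (List.nodup_cons.mp this).1 hx
    · have := hQ.reverse.support_nodup
      rw [Walk.support_eq_cons] at this
      exact (List.nodup_cons.mp this).1 hx'

lemma my_sum_split {V : Type*} [DecidableEq V] {G : SimpleGraph V} {v u w : V}
    (P : G.Walk v w) (hP : P.IsPath) (h : u ∈ P.support) (wt : Sym2 V → ℤ) :
    ∑ e ∈ P.edges.toFinset, wt e =
      ∑ e ∈ (P.takeUntil u h).edges.toFinset, wt e +
      ∑ e ∈ (P.dropUntil u h).edges.toFinset, wt e := by
  have hsplit : (P.takeUntil u h).edges ++ (P.dropUntil u h).edges = P.edges := by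
    rw [← Walk.edges_append, Walk.take_spec]
  have hnd : ((P.takeUntil u h).edges ++ (P.dropUntil u h).edges).Nodup := by
    rw [hsplit]; exact hP.isTrail.edges_nodup
  rw [← hsplit, List.toFinset_append, Finset.sum_union]
  rw [List.nodup_append] at hnd
  exact Finset.disjoint_left.mpr (fun {e} he he' =>
    hnd.2.2 _ (List.mem_toFinset.mp he) _ (List.mem_toFinset.mp he') rfl)

lemma my_sum_ones {V : Type*} [DecidableEq V] {G : SimpleGraph V} {v w : V}
    (Q : G.Walk v w) (hQ : Q.IsTrail) (wt : Sym2 V → ℤ)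
    (h1 : ∀ e ∈ Q.edges, wt e = 1) :
    ∑ e ∈ Q.edges.toFinset, wt e = Q.length := by
  rw [Finset.sum_congr rfl (fun e he => h1 e (List.mem_toFinset.mp he)),
    Finset.sum_const, List.toFinset_card_of_nodup hQ.edges_nodup,
    Walk.length_edges, nsmul_eq_mul, mul_one]

lemma my_key {V : Type*} [Fintype V] [DecidableEq V]
    (G : SimpleGraph V) (hbip : G.Colorable 2) (wt : Sym2 V → ℤ)
    (hwt : ∀ e ∈ G.edgeSet, wt e = 1 ∨ wt e = -1)
    (hcyc : ∀ (x : V) (c : G.Walk x x), c.IsCycle →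
      0 < ∑ e ∈ c.edges.toFinset, wt e) :
    ∀ d : ℕ, ∀ v w : V, v ≠ w → ∀ Q : G.Walk v w, Q.IsPath → Q.length = d →
      (∀ e ∈ Q.edges, wt e = 1) → ∀ P : G.Walk v w, P.IsPath →
      (2 : ℤ) - d ≤ ∑ e ∈ P.edges.toFinset, wt e := by
  intro d
  induction d using Nat.strong_induction_on with
  | _ d IH =>
  intro v w hvw Q hQ hQlen hQpos P hP
  have hd1 : 1 ≤ d := by
    rcases Nat.eq_zero_or_pos d with h | h
    · subst h
      exact absurd (Walk.eq_of_length_eq_zero hQlen) hvw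
    · exact h
  by_cases hsh : ∃ u, u ∈ P.support ∧ u ∈ Q.support ∧ u ≠ v ∧ u ≠ w
  · obtain ⟨u, huP, huQ, huv, huw⟩ := hsh
    have hlen : (Q.takeUntil u huQ).length + (Q.dropUntil u huQ).length = d := by
      rw [← hQlen, ← Walk.length_append, Walk.take_spec]
    have h1 : 1 ≤ (Q.takeUntil u huQ).length := by
      rcases Nat.eq_zero_or_pos (Q.takeUntil u huQ).length with h | h
      · exact absurd (Walk.eq_of_length_eq_zero h) (Ne.symm huv)
      · exact h
    have h2 : 1 ≤ (Q.dropUntil u huQ).length := by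
      rcases Nat.eq_zero_or_pos (Q.dropUntil u huQ).length with h | h
      · exact absurd (Walk.eq_of_length_eq_zero h) huw
      · exact h
    have e1 := IH (Q.takeUntil u huQ).length (by omega) v u (Ne.symm huv)
      (Q.takeUntil u huQ) (hQ.takeUntil huQ) rfl
      (fun e he => hQpos e (Walk.edges_takeUntil_subset _ _ he))
      (P.takeUntil u huP) (hP.takeUntil huP)
    have e2 := IH (Q.dropUntil u huQ).length (by omega) u w huw
      (Q.dropUntil u huQ) (hQ.dropUntil huQ) rfl
      (fun e he => hQpos e (Walk.edges_dropUntil_subset _ _ he))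
      (P.dropUntil u huP) (hP.dropUntil huP)
    rw [my_sum_split P hP huP wt]
    have hc : ((Q.takeUntil u huQ).length : ℤ) + ((Q.dropUntil u huQ).length : ℤ)
        = (d : ℤ) := by exact_mod_cast hlen
    linarith
  · push_neg at hsh
    have hsupp : ∀ x, x ∈ P.support → x ∈ Q.support → x = v ∨ x = w := by
      intro x hxP hxQ
      by_cases hxv : x = v
      · exact Or.inl hxv
      · exact Or.inr (hsh x hxP hxQ hxv)
    by_cases hdisj : ∀ e ∈ P.edges, e ∉ Q.edges
    · have hcycle := my_cycle hvw hP hQ hsupp hdisj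
      have hpos := hcyc v (P.append Q.reverse) hcycle
      have hedges : (P.append Q.reverse).edges = P.edges ++ Q.edges.reverse := by
        rw [Walk.edges_append, Walk.edges_reverse]
      have hsum : ∑ e ∈ (P.append Q.reverse).edges.toFinset, wt e
          = (∑ e ∈ P.edges.toFinset, wt e) + (d : ℤ) := by
        rw [hedges, List.toFinset_append, Finset.sum_union, List.toFinset_reverse,
          my_sum_ones Q hQ.isTrail wt hQpos, hQlen]
        exact Finset.disjoint_left.mpr (fun {e} he he' => hdisj e
          (List.mem_toFinset.mp he)
          (by rw [List.toFinset_reverse] at he'; exact List.mem_toFinset.mp he'))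
      have heven : Even (P.append Q.reverse).length := by
        obtain ⟨C⟩ := hbip
        exact (my_color_parity C (P.append Q.reverse)).mp rfl
      have hpar := my_sum_parity (P.append Q.reverse).edges.toFinset wt
        (fun e he => hwt e (Walk.edges_subset_edgeSet _ (List.mem_toFinset.mp he)))
      have hcard : ((P.append Q.reverse).edges.toFinset.card : ℤ)
          = ((P.append Q.reverse).length : ℤ) := by
        rw [List.toFinset_card_of_nodup hcycle.isTrail.edges_nodup, Walk.length_edges]
      rw [hcard] at hpar
      obtain ⟨k, hk⟩ := hpar
      obtain ⟨m, hm⟩ := heven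
      have hm' : ((P.append Q.reverse).length : ℤ) = m + m := by exact_mod_cast hm
      rw [hsum] at hpos hk
      omega
    · push_neg at hdisj
      obtain ⟨e, heP, heQ⟩ := hdisj
      have key : P.edges = [s(v, w)] := by
        induction e using Sym2.ind with
        | _ a b =>
          have haP := Walk.fst_mem_support_of_mem_edges P heP
          have hbP := Walk.snd_mem_support_of_mem_edges P heP
          have haQ := Walk.fst_mem_support_of_mem_edges Q heQ
          have hbQ := Walk.snd_mem_support_of_mem_edges Q heQ
          have hab : a ≠ b := G.ne_of_adj (Walk.adj_of_mem_edges P heP)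
          have hevw : s(a, b) = s(v, w) := by
            rcases hsupp a haP haQ with rfl | rfl <;>
              rcases hsupp b hbP hbQ with rfl | rfl
            · exact absurd rfl hab
            · rfl
            · exact Sym2.eq_swap
            · exact absurd rfl hab
          rw [hevw] at heP
          exact my_edge_path hP heP
      have hwt1 : wt s(v, w) = 1 := by
        have : s(v, w) ∈ Q.edges := by
          have : e ∈ P.edges := heP
          rw [key] at this
          simp at this
          rwa [← this]
        exact hQpos _ this
      rw [key]
      simp only [List.toFinset_cons, List.toFinset_nil, LawfulSingleton.insert_empty_eq,
        Finset.sum_singleton, hwt1]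
      have : (1 : ℤ) ≤ (d : ℤ) := by exact_mod_cast hd1
      linarith

/-- In a finite bipartite simple graph with ±1 edge weights in which
every cycle has strictly positive total weight, if `Q` is a path from `v` to `w`
of length `d ≥ 1` all of whose edges have weight `+1`, then every path from `v`
to `w` has total weight at least `2 - d`. -/
theorem stmt_3 {V : Type*} [Fintype V] [DecidableEq V]
    (G : SimpleGraph V) [DecidableRel G.Adj]
    (hbip : G.Colorable 2)
    (wt : Sym2 V → ℤ) (hwt : ∀ e ∈ G.edgeSet, wt e = 1 ∨ wt e = -1)
    (hcyc : ∀ (x : V) (c : G.Walk x x), c.IsCycle →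
      0 < ∑ e ∈ c.edges.toFinset, wt e)
    (v w : V) (hvw : v ≠ w) (d : ℕ) (hd : 1 ≤ d)
    (Q : G.Walk v w) (hQpath : Q.IsPath) (hQlen : Q.length = d)
    (hQpos : ∀ e ∈ Q.edges, wt e = 1)
    (P : G.Walk v w) (hPpath : P.IsPath) :
    (2 : ℤ) - d ≤ ∑ e ∈ P.edges.toFinset, wt e :=
  my_key G hbip wt hwt hcyc d v w hvw Q hQpath hQlen hQpos P hPpath
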